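/- For every positive integer n and every ε with 0 < ε < 1/2, there exists an allocation problem with n agents, 2n−1 items, and additive positive valuations, such that for every subset S of the items and every EFX allocation Y of S, we have (2^{1−1/n} − 2ε)·NW(Y) ≤ opt(M), where opt(M) is the maximum Nash welfare over all allocations of all items M and NW denotes Nash welfare. -/

import Mathlib

open Finset

namespace EFXAux

def pers (m : ℕ) (i : Fin (m+1)) : Fin (2*(m+1)-1) := ⟨m + i.val, by omega⟩

noncomputable def vv (m : ℕ) (ε : ℝ) (i : Fin (m+1)) (g : Fin (2*(m+1)-1)) : ℝ :=
  if (g:ℕ) < m then 1 else if (g:ℕ) = m + i.val then 1 - ε else ε/(2*(m+1))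

def CC (m : ℕ) : Finset (Fin (2*(m+1)-1)) := univ.filter (fun g => (g:ℕ) < m)

def X0 (m : ℕ) (i : Fin (m+1)) : Finset (Fin (2*(m+1)-1)) :=
  if (i:ℕ) < m then {⟨i, by omega⟩, pers m i} else {pers m i}

lemma CC_card (m : ℕ) : (CC m).card = m := by
  have : CC m = Finset.map ⟨fun j : Fin m => (⟨j, by omega⟩ : Fin (2*(m+1)-1)),
      by intro a b hab; simpa [Fin.ext_iff] using hab⟩ univ := by
    ext g
    simp only [CC, mem_filter, mem_univ, true_and, mem_map, Function.Embedding.coeFn_mk]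
    constructor
    · intro hg; exact ⟨⟨g, hg⟩, Fin.ext rfl⟩
    · rintro ⟨j, -, rfl⟩; exact j.isLt
  rw [this, card_map, card_univ, Fintype.card_fin]

lemma pers_not_mem_CC (m : ℕ) (i : Fin (m+1)) : pers m i ∉ CC m := by
  simp [CC, pers]

lemma X0_part (m : ℕ) (g : Fin (2*(m+1)-1)) : ∃! i, g ∈ X0 m i := by
  by_cases hg : (g:ℕ) < m
  · refine ⟨⟨g, by omega⟩, ?_, ?_⟩
    · simp [X0, hg, Fin.ext_iff]
    · intro j hj
      by_cases hj' : (j:ℕ) < m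
      · simp only [X0, hj', if_true, mem_insert, mem_singleton, Fin.ext_iff, pers] at hj
        rcases hj with h | h
        · exact Fin.ext (by simpa using h.symm)
        · omega
      · simp only [X0, hj', if_false, mem_singleton, Fin.ext_iff, pers] at hj
        omega
  · have hgv : (g:ℕ) - m < m + 1 := by omega
    refine ⟨⟨(g:ℕ) - m, hgv⟩, ?_, ?_⟩
    · by_cases h2 : (g:ℕ) - m < m
      · simp only [X0, h2, if_true, mem_insert, mem_singleton, Fin.ext_iff, pers]
        right; omega
      · simp only [X0, h2, if_false, mem_singleton, Fin.ext_iff, pers]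
        omega
    · intro j hj
      by_cases hj' : (j:ℕ) < m
      · simp only [X0, hj', if_true, mem_insert, mem_singleton, Fin.ext_iff, pers] at hj
        rcases hj with h | h
        · omega
        · exact Fin.ext (by simp; omega)
      · simp only [X0, hj', if_false, mem_singleton, Fin.ext_iff, pers] at hj
        exact Fin.ext (by simp; omega)

lemma X0_prod (m : ℕ) (ε : ℝ) :
    ∏ i, ∑ x ∈ X0 m i, vv m ε i x = (2-ε)^m * (1-ε) := by
  rw [Fin.prod_univ_castSucc]
  have hlast : ∑ x ∈ X0 m (Fin.last m), vv m ε (Fin.last m) x = 1 - ε := by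
    have h : ¬ ((Fin.last m : Fin (m+1)) : ℕ) < m := by simp
    simp only [X0, h, if_false, sum_singleton, vv, pers]
    simp
  have hcs : ∀ i : Fin m, ∑ x ∈ X0 m i.castSucc, vv m ε i.castSucc x = 2 - ε := by
    intro i
    have h : ((i.castSucc : Fin (m+1)) : ℕ) < m := by simp
    have hne : (⟨(i.castSucc : Fin (m+1)), by omega⟩ : Fin (2*(m+1)-1)) ≠ pers m i.castSucc := by
      simp [Fin.ext_iff, pers]; omega
    simp only [X0, h, if_true]
    rw [sum_pair hne]
    have e1 : vv m ε i.castSucc ⟨((i.castSucc : Fin (m+1)) : ℕ), by omega⟩ = 1 := by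
      simp [vv, h]
    have e2 : vv m ε i.castSucc (pers m i.castSucc) = 1 - ε := by
      simp only [vv, pers]
      rw [if_neg (by omega)]; simp
    rw [e1, e2]; ring
  rw [hlast]
  rw [Finset.prod_congr rfl (fun i _ => hcs i), prod_const, card_univ, Fintype.card_fin]

end EFXAux

namespace EFXAux

lemma efx_sum_bound {n : ℕ} {ι : Type*} [Fintype ι] [DecidableEq ι]
    (v : Fin n → ι → ℝ) (C : Finset ι) (p : Fin n → ι) (ε δ : ℝ)
    (hε0 : 0 < ε) (hε1 : ε < 1)
    (hδ0 : 0 ≤ δ) (hδ1 : (Fintype.card ι : ℝ) * δ < ε)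
    (hCn : C.card < n)
    (hpC : ∀ i, p i ∉ C)
    (hv1 : ∀ i, ∀ g ∈ C, v i g = 1)
    (hv2 : ∀ i, v i (p i) = 1 - ε)
    (hv3 : ∀ i g, g ∉ C → g ≠ p i → v i g = δ)
    (Y : Fin n → Finset ι)
    (hdisj : ∀ i j : Fin n, i ≠ j → Disjoint (Y i) (Y j))
    (hefx : ∀ i j : Fin n, ∀ g ∈ Y j, ∑ x ∈ Y i, v i x ≥ ∑ x ∈ Y j \ {g}, v i x) :
    ∑ i, ∑ x ∈ Y i, v i x ≤ n + ((Fintype.card ι : ℝ) - C.card) * δ := by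
  have hv0 : ∀ i g, 0 ≤ v i g := by
    intro i g
    by_cases h1 : g ∈ C
    · rw [hv1 i g h1]; norm_num
    · by_cases h2 : g = p i
      · rw [h2, hv2]; linarith
      · rw [hv3 i g h1 h2]; exact hδ0
  have hvle1 : ∀ i g, v i g ≤ 1 := by
    intro i g
    have hcard : (1:ℝ) ≤ Fintype.card ι := by
      have : 0 < Fintype.card ι := Fintype.card_pos_iff.2 ⟨g⟩
      exact_mod_cast this
    by_cases h1 : g ∈ C
    · rw [hv1 i g h1]
    · by_cases h2 : g = p i
      · rw [h2, hv2]; linarith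
      · rw [hv3 i g h1 h2]; nlinarith
  -- an agent with value ≥ 1 must hold a common item
  have keyC : ∀ j, 1 ≤ ∑ x ∈ Y j, v j x → (Y j ∩ C).Nonempty := by
    intro j hj
    by_contra hne
    have hnc : ∀ g ∈ Y j, g ∉ C := by
      intro g hg hgC
      exact hne ⟨g, mem_inter.2 ⟨hg, hgC⟩⟩
    have hsplit : ∑ x ∈ Y j ∩ {p j}, v j x + ∑ x ∈ Y j \ {p j}, v j x = ∑ x ∈ Y j, v j x :=
      Finset.sum_inter_add_sum_sdiff _ _ _
    have h1 : ∑ x ∈ Y j ∩ {p j}, v j x ≤ 1 - ε := by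
      have : ∑ x ∈ Y j ∩ {p j}, v j x ≤ ∑ x ∈ ({p j} : Finset ι), v j x :=
        Finset.sum_le_sum_of_subset_of_nonneg (inter_subset_right) (fun g _ _ => hv0 j g)
      simpa [hv2 j] using this
    have h2 : ∑ x ∈ Y j \ {p j}, v j x ≤ (Fintype.card ι : ℝ) * δ := by
      have hb : ∀ x ∈ Y j \ {p j}, v j x ≤ δ := by
        intro x hx
        rcases mem_sdiff.1 hx with ⟨hx1, hx2⟩
        rw [hv3 j x (hnc x hx1) (by simpa using hx2)]
      calc ∑ x ∈ Y j \ {p j}, v j x ≤ (Y j \ {p j}).card • δ := Finset.sum_le_card_nsmul _ _ _ hb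
        _ = ((Y j \ {p j}).card : ℝ) * δ := by rw [nsmul_eq_mul]
        _ ≤ (Fintype.card ι : ℝ) * δ := by
            apply mul_le_mul_of_nonneg_right _ hδ0
            exact_mod_cast Finset.card_le_univ _
    linarith
  -- disjoint counting
  have count : ∑ j, (Y j ∩ C).card ≤ C.card := by
    have hd : ∀ i ∈ (univ : Finset (Fin n)), ∀ j ∈ univ, i ≠ j →
        Disjoint (Y i ∩ C) (Y j ∩ C) := by
      intro i _ j _ hij
      exact (hdisj i j hij).mono inter_subset_left inter_subset_left
    calc ∑ j, (Y j ∩ C).card = (univ.biUnion fun j => Y j ∩ C).card :=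
          (Finset.card_biUnion hd).symm
      _ ≤ C.card := Finset.card_le_card (by
          intro g hg
          rcases mem_biUnion.1 hg with ⟨j, _, hj⟩
          exact (mem_inter.1 hj).2)
  -- a tool: if some bundle minus one item still contains a common item, everyone holds a common
  have all_common : ∀ i : Fin n, ∀ c g : ι, c ∈ Y i → g ∈ Y i → c ∈ C → c ≠ g →
      False := by
    intro i c g hc hg hcC hcg
    -- every agent j has a common item
    have hall : ∀ j, (Y j ∩ C).Nonempty := by
      intro j
      apply keyC
      have h1 : ∑ x ∈ Y i \ {g}, v j x ≥ v j c := by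
        apply Finset.single_le_sum (fun x _ => hv0 j x)
        exact mem_sdiff.2 ⟨hc, by simpa using hcg⟩
      have h2 := hefx j i g hg
      have hc1 : v j c = 1 := hv1 j c hcC
      linarith
    -- counting: i has extra
    have hicard : 2 ≤ (Y i ∩ C).card ∨ (1 ≤ (Y i ∩ C).card ∧ g ∉ C) := by
      by_cases hgC : g ∈ C
      · left
        have : ({c, g} : Finset ι) ⊆ Y i ∩ C := by
          intro x hx
          rcases mem_insert.1 hx with rfl | hx
          · exact mem_inter.2 ⟨hc, hcC⟩
          · rw [mem_singleton.1 hx]; exact mem_inter.2 ⟨hg, hgC⟩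
        calc 2 = ({c, g} : Finset ι).card := (Finset.card_pair hcg).symm
          _ ≤ _ := Finset.card_le_card this
      · right
        exact ⟨Finset.card_pos.2 ⟨c, mem_inter.2 ⟨hc, hcC⟩⟩, hgC⟩
    have hsum : ∀ j, 1 ≤ (Y j ∩ C).card := fun j => Finset.card_pos.2 (hall j)
    have htot : n ≤ ∑ j, (Y j ∩ C).card := by
      calc n = ∑ _j : Fin n, 1 := by simp
        _ ≤ _ := Finset.sum_le_sum (fun j _ => hsum j)
    rcases hicard with h2 | ⟨h1, hgC⟩
    · -- sum ≥ n + 1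
      have : ∑ j, (Y j ∩ C).card = (Y i ∩ C).card + ∑ j ∈ univ.erase i, (Y j ∩ C).card :=
        (Finset.add_sum_erase _ _ (mem_univ i)).symm
      have h3 : n - 1 ≤ ∑ j ∈ univ.erase i, (Y j ∩ C).card := by
        calc n - 1 = (univ.erase i).card := by rw [Finset.card_erase_of_mem (mem_univ i)]; simp
          _ = ∑ j ∈ univ.erase i, 1 := by simp
          _ ≤ _ := Finset.sum_le_sum (fun j _ => hsum j)
      omega
    · omega
  -- no two commons in one bundle
  have lemA : ∀ i : Fin n, ∀ g₁ ∈ Y i, ∀ g₂ ∈ Y i, g₁ ∈ C → g₂ ∈ C → g₁ = g₂ := by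
    intro i g₁ h₁ g₂ h₂ hC₁ _
    by_contra hne
    exact all_common i g₁ g₂ h₁ h₂ hC₁ hne
  -- no common together with own personal item
  have lemB : ∀ i : Fin n, ∀ g ∈ Y i, g ∈ C → p i ∉ Y i := by
    intro i g hg hgC hp
    exact all_common i g (p i) hg hp hgC (by rintro rfl; exact hpC i hgC)
  -- per-agent decomposition
  have hbig : ∀ i : Fin n, ∑ x ∈ Y i ∩ insert (p i) C, v i x ≤ 1 := by
    intro i
    have hcard1 : (Y i ∩ insert (p i) C).card ≤ 1 := by
      rw [Finset.card_le_one]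
      intro a ha b hb
      rcases mem_inter.1 ha with ⟨haY, haI⟩
      rcases mem_inter.1 hb with ⟨hbY, hbI⟩
      rcases mem_insert.1 haI with rfl | haC
      · rcases mem_insert.1 hbI with rfl | hbC
        · rfl
        · exact absurd haY (lemB i b hbY hbC)
      · rcases mem_insert.1 hbI with rfl | hbC
        · exact absurd hbY (lemB i a haY haC)
        · exact lemA i a haY b hbY haC hbC
    calc ∑ x ∈ Y i ∩ insert (p i) C, v i x ≤ (Y i ∩ insert (p i) C).card • (1:ℝ) :=
          Finset.sum_le_card_nsmul _ _ _ (fun x _ => hvle1 i x)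
      _ = ((Y i ∩ insert (p i) C).card : ℝ) := by rw [nsmul_eq_mul, mul_one]
      _ ≤ 1 := by exact_mod_cast hcard1
  have hsmall : ∀ i : Fin n, ∑ x ∈ Y i \ insert (p i) C, v i x
      = ((Y i \ insert (p i) C).card : ℝ) * δ := by
    intro i
    rw [Finset.sum_congr rfl (g := fun _ => δ), Finset.sum_const, nsmul_eq_mul]
    intro x hx
    rcases mem_sdiff.1 hx with ⟨_, hx2⟩
    exact hv3 i x (fun h => hx2 (mem_insert_of_mem h)) (fun h => hx2 (h ▸ mem_insert_self _ _))
  have hsmallcount : ∑ i, (Y i \ insert (p i) C).card ≤ Fintype.card ι - C.card := by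
    have hd : ∀ i ∈ (univ : Finset (Fin n)), ∀ j ∈ univ, i ≠ j →
        Disjoint (Y i \ insert (p i) C) (Y j \ insert (p j) C) := by
      intro i _ j _ hij
      exact (hdisj i j hij).mono sdiff_subset sdiff_subset
    calc ∑ i, (Y i \ insert (p i) C).card = (univ.biUnion fun i => Y i \ insert (p i) C).card :=
          (Finset.card_biUnion hd).symm
      _ ≤ (univ \ C).card := Finset.card_le_card (by
          intro g hg; rcases mem_biUnion.1 hg with ⟨j, _, hj⟩
          exact mem_sdiff.2 ⟨mem_univ g, fun h => (mem_sdiff.1 hj).2 (mem_insert_of_mem h)⟩)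
      _ = Fintype.card ι - C.card := by rw [Finset.card_sdiff_of_subset (subset_univ _), card_univ]
  -- assemble
  have hCle : (C.card : ℕ) ≤ Fintype.card ι := Finset.card_le_univ _
  calc ∑ i, ∑ x ∈ Y i, v i x
      = ∑ i, (∑ x ∈ Y i ∩ insert (p i) C, v i x + ∑ x ∈ Y i \ insert (p i) C, v i x) := by
        refine Finset.sum_congr rfl (fun i _ => ?_)
        rw [Finset.sum_inter_add_sum_sdiff]
    _ ≤ ∑ i, (1 + ((Y i \ insert (p i) C).card : ℝ) * δ) := by
        refine Finset.sum_le_sum (fun i _ => ?_)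
        rw [hsmall i]
        exact add_le_add_left (hbig i) _
    _ = n + (∑ i, ((Y i \ insert (p i) C).card : ℝ)) * δ := by
        rw [Finset.sum_add_distrib, Finset.sum_mul]
        simp
    _ ≤ n + ((Fintype.card ι : ℝ) - C.card) * δ := by
        apply add_le_add_right
        apply mul_le_mul_of_nonneg_right _ hδ0
        have : (∑ i, ((Y i \ insert (p i) C).card : ℝ)) = ((∑ i, (Y i \ insert (p i) C).card : ℕ) : ℝ) := by
          push_cast; ring
        rw [this]
        have h2 : ((Fintype.card ι - C.card : ℕ) : ℝ) = (Fintype.card ι : ℝ) - C.card := by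
          push_cast [Nat.cast_sub hCle]; ring
        rw [← h2]
        exact_mod_cast hsmallcount
  
end EFXAux

namespace EFXAux

lemma amgm {k : ℕ} (hk : 0 < k) (x : Fin k → ℝ) (hx : ∀ i, 0 ≤ x i) :
    ∏ i, x i ≤ ((∑ i, x i) / k) ^ k := by
  have hw : ∀ i ∈ (univ : Finset (Fin k)), (0:ℝ) ≤ 1 / k := by
    intro i _; positivity
  have hw' : ∑ _i : Fin k, (1:ℝ)/k = 1 := by
    rw [Finset.sum_const, card_univ, Fintype.card_fin, nsmul_eq_mul]
    field_simp
  have h := Real.geom_mean_le_arith_mean_weighted univ (fun _ => (1:ℝ)/k) x hw hw'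
    (fun i _ => hx i)
  have hL : ∏ i, x i ^ ((1:ℝ)/k) = (∏ i, x i) ^ ((1:ℝ)/k) := by
    rw [← Real.finset_prod_rpow _ _ (fun i _ => hx i)]
  have hR : ∑ i, (1:ℝ)/k * x i = (∑ i, x i) / k := by
    rw [← Finset.mul_sum]; ring
  rw [hL, hR] at h
  have hprod : 0 ≤ ∏ i, x i := Finset.prod_nonneg (fun i _ => hx i)
  have := pow_le_pow_left₀ (Real.rpow_nonneg hprod _) h k
  rwa [← Real.rpow_natCast ((∏ i, x i) ^ ((1:ℝ)/k)) k, ← Real.rpow_mul hprod,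
    one_div, inv_mul_cancel₀ (by exact_mod_cast hk.ne' : (k:ℝ) ≠ 0), Real.rpow_one] at this

lemma exp_half_lt_two : Real.exp (1/2) < 2 := by
  have h1 : Real.exp (1/2) * Real.exp (1/2) = Real.exp 1 := by
    rw [← Real.exp_add]; norm_num
  have h2 : Real.exp 1 < 2.7182818286 := Real.exp_one_lt_d9
  nlinarith [Real.exp_pos (1/2)]

lemma key_base (m : ℕ) : (1 + 1/(2*((m:ℝ)+1))) ≤ (2:ℝ) ^ (1/((m:ℝ)+1)) := by
  set N : ℝ := (m:ℝ)+1 with hN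
  have hN0 : (0:ℝ) < N := by positivity
  have hpow : (1 + 1/(2*N)) ^ (m+1) ≤ ((2:ℝ) ^ (1/N)) ^ (m+1) := by
    calc (1 + 1/(2*N)) ^ (m+1) ≤ (Real.exp (1/(2*N))) ^ (m+1) := by
          apply pow_le_pow_left₀ (by positivity)
          have := Real.add_one_le_exp (1/(2*N))
          linarith
      _ = Real.exp ((m+1) * (1/(2*N))) := by
          rw [← Real.exp_nat_mul]; push_cast; ring_nf
      _ = Real.exp (1/2) := by
          congr 1
          field_simp
          ring
      _ ≤ 2 := exp_half_lt_two.le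
      _ = ((2:ℝ) ^ (1/N)) ^ (m+1) := by
          rw [← Real.rpow_natCast ((2:ℝ) ^ (1/N)) (m+1), ← Real.rpow_mul (by norm_num)]
          rw [show 1/N * (((m+1:ℕ)):ℝ) = 1 by push_cast; field_simp; exact hN.symm, Real.rpow_one]
  have h1 : (0:ℝ) ≤ 1 + 1/(2*N) := by positivity
  have h2 : (0:ℝ) ≤ (2:ℝ) ^ (1/N) := Real.rpow_nonneg (by norm_num) _
  exact (pow_le_pow_iff_left₀ h1 h2 (Nat.succ_ne_zero m)).1 hpow

lemma analytic (m : ℕ) (ε : ℝ) (hε0 : 0 < ε) (hε : ε < 1/2)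
    (hc : 0 < (2:ℝ) ^ (1 - 1/((m:ℝ)+1)) - 2*ε) :
    ((2:ℝ) ^ (1 - 1/((m:ℝ)+1)) - 2*ε)^(m+1) * (((((m:ℝ)+1) + ε/2))/((m:ℝ)+1))^(m+1)
      ≤ (2-ε)^m * (1-ε) := by
  set N : ℝ := (m:ℝ)+1 with hN
  have hN0 : (0:ℝ) < N := by positivity
  set a : ℝ := (2:ℝ) ^ (1 - 1/N) with ha
  have ha0 : 0 < a := Real.rpow_pos_of_pos (by norm_num) _
  have key1 : a * (1 + 1/(2*N)) ≤ 2 := by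
    calc a * (1 + 1/(2*N)) ≤ a * (2:ℝ)^(1/N) := by
          apply mul_le_mul_of_nonneg_left (key_base m) ha0.le
      _ = 2 := by
          rw [ha, ← Real.rpow_add (by norm_num)]
          norm_num
  have hfrac : (N + ε/2)/N = 1 + ε * (1/(2*N)) := by field_simp
  have step : (a - 2*ε) * ((N + ε/2)/N) ≤ a * (1-ε) := by
    rw [hfrac]
    have hu0 : 0 < 1/(2*N) := by positivity
    nlinarith [mul_le_mul_of_nonneg_right key1 hε0.le, mul_pos hε0 hu0, mul_pos (mul_pos hε0 hε0) hu0]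
  have hfacnn : 0 ≤ (a - 2*ε) * ((N + ε/2)/N) := by
    apply mul_nonneg hc.le
    positivity
  have hpow : ((a - 2*ε) * ((N + ε/2)/N))^(m+1) ≤ (a * (1-ε))^(m+1) :=
    pow_le_pow_left₀ hfacnn step _
  have haN : a ^ (m+1) = 2 ^ m := by
    rw [ha, ← Real.rpow_natCast ((2:ℝ) ^ (1 - 1/N)) (m+1), ← Real.rpow_mul (by norm_num)]
    have : (1 - 1/N) * ((m+1 : ℕ):ℝ) = (m:ℕ) := by
      push_cast
      rw [hN]; field_simp; ring
    rw [this, Real.rpow_natCast]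
  calc (a - 2*ε)^(m+1) * ((N + ε/2)/N)^(m+1)
      = ((a - 2*ε) * ((N + ε/2)/N))^(m+1) := by rw [mul_pow]
    _ ≤ (a * (1-ε))^(m+1) := hpow
    _ = a^(m+1) * (1-ε)^(m+1) := by rw [mul_pow]
    _ = 2^m * ((1-ε)^m * (1-ε)) := by rw [haN, pow_succ]
    _ = (2*(1-ε))^m * (1-ε) := by rw [mul_pow]; ring
    _ ≤ (2-ε)^m * (1-ε) := by
        apply mul_le_mul_of_nonneg_right _ (by linarith)
        apply pow_le_pow_left₀ (by linarith) (by linarith)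

end EFXAux


/-- Theorem 3.1: for every `n ≥ 1` and `0 < ε < 1/2` there is an allocation problem
with `n` agents, `2n−1` items and additive positive valuations, such that every EFX
allocation `Y` of every subset `S` of the items satisfies
`(2^{1−1/n} − 2ε)·NW(Y) ≤ opt(M)`, where `opt(M)` is witnessed by a Nash-welfare
maximizing allocation `X` of all items. -/
theorem efx_nash_lower_bound (n : ℕ) (hn : 0 < n) (ε : ℝ) (hε0 : 0 < ε) (hε : ε < 1 / 2) :
    ∃ v : Fin n → Fin (2 * n - 1) → ℝ,
      (∀ i g, 0 < v i g) ∧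
      ∃ X : Fin n → Finset (Fin (2 * n - 1)),
        (∀ g, ∃! i, g ∈ X i) ∧
        (∀ X' : Fin n → Finset (Fin (2 * n - 1)), (∀ g, ∃! i, g ∈ X' i) →
          ∏ i, ∑ x ∈ X' i, v i x ≤ ∏ i, ∑ x ∈ X i, v i x) ∧
        ∀ (S : Finset (Fin (2 * n - 1))) (Y : Fin n → Finset (Fin (2 * n - 1))),
          (∀ i, Y i ⊆ S) →
          (∀ g ∈ S, ∃! i, g ∈ Y i) →
          (∀ i j : Fin n, ∀ g ∈ Y j,
            ∑ x ∈ Y i, v i x ≥ ∑ x ∈ Y j \ {g}, v i x) →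
          ((2 : ℝ) ^ (1 - 1 / (n : ℝ)) - 2 * ε) *
              (∏ i, ∑ x ∈ Y i, v i x) ^ (1 / (n : ℝ)) ≤
            (∏ i, ∑ x ∈ X i, v i x) ^ (1 / (n : ℝ)) := by
  classical
  obtain ⟨m, rfl⟩ : ∃ m, n = m + 1 := ⟨n - 1, by omega⟩
  refine ⟨EFXAux.vv m ε, ?_, ?_⟩
  · intro i g
    simp only [EFXAux.vv]
    split_ifs
    · norm_num
    · linarith
    · positivity
  set f : (Fin (m+1) → Finset (Fin (2*(m+1)-1))) → ℝ :=
    fun X' => ∏ i, ∑ x ∈ X' i, EFXAux.vv m ε i x with hf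
  set A : Finset (Fin (m+1) → Finset (Fin (2*(m+1)-1))) :=
    univ.filter (fun X' => ∀ g, ∃! i, g ∈ X' i) with hA
  have hX0A : EFXAux.X0 m ∈ A := mem_filter.2 ⟨mem_univ _, EFXAux.X0_part m⟩
  obtain ⟨X, hXA, hXmax⟩ := Finset.exists_max_image A f ⟨EFXAux.X0 m, hX0A⟩
  have hXpart : ∀ g, ∃! i, g ∈ X i := (mem_filter.1 hXA).2
  have hPXlow : (2-ε)^m * (1-ε) ≤ f X := by
    rw [← EFXAux.X0_prod m ε]
    exact hXmax _ hX0A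
  refine ⟨X, hXpart, fun X' hX' => hXmax X' (mem_filter.2 ⟨mem_univ _, hX'⟩), ?_⟩
  intro S Y hYS hYpart hefx
  -- disjointness
  have hdisj : ∀ i j : Fin (m+1), i ≠ j → Disjoint (Y i) (Y j) := by
    intro i j hij
    rw [Finset.disjoint_left]
    intro g hgi hgj
    exact hij ((hYpart g (hYS i hgi)).unique hgi hgj)
  -- cast facts
  have hcard : (Fintype.card (Fin (2*(m+1)-1)) : ℝ) = 2*(m:ℝ)+1 := by
    rw [Fintype.card_fin]
    have : (2*(m+1)-1 : ℕ) = 2*m+1 := by omega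
    rw [this]; push_cast; ring
  have hN0 : (0:ℝ) < (m:ℝ)+1 := by positivity
  -- sum bound
  have hSum : ∑ i, ∑ x ∈ Y i, EFXAux.vv m ε i x ≤ ((m:ℝ)+1) + ε/2 := by
    have h := EFXAux.efx_sum_bound (EFXAux.vv m ε) (EFXAux.CC m) (EFXAux.pers m)
      ε (ε/(2*((m:ℝ)+1))) hε0 (by linarith) (by positivity)
      (by rw [hcard, ← mul_div_assoc, div_lt_iff₀ (by positivity : (0:ℝ) < 2*((m:ℝ)+1))]
          nlinarith)
      (by rw [EFXAux.CC_card]; omega)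
      (EFXAux.pers_not_mem_CC m)
      (by intro i g hg
          have : (g:ℕ) < m := (mem_filter.1 hg).2
          simp [EFXAux.vv, this])
      (by intro i
          simp only [EFXAux.vv, EFXAux.pers]
          rw [if_neg (by omega)]; simp)
      (by intro i g hg1 hg2
          have h1 : ¬ (g:ℕ) < m := fun h => hg1 (mem_filter.2 ⟨mem_univ _, h⟩)
          have h2 : ¬ (g:ℕ) = m + (i:ℕ) := by
            intro h
            exact hg2 (Fin.ext (by simpa [EFXAux.pers] using h))
          simp [EFXAux.vv, h1, h2])
      Y hdisj hefx
    rw [EFXAux.CC_card, hcard] at h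
    calc ∑ i, ∑ x ∈ Y i, EFXAux.vv m ε i x
        ≤ ((m+1 : ℕ):ℝ) + (2*(m:ℝ)+1 - (m:ℕ)) * (ε/(2*((m:ℝ)+1))) := h
      _ = ((m:ℝ)+1) + ε/2 := by push_cast; field_simp; ring
  -- product bound via AM-GM
  have hvpos : ∀ i g, (0:ℝ) ≤ EFXAux.vv m ε i g := by
    intro i g
    simp only [EFXAux.vv]
    split_ifs
    · norm_num
    · linarith
    · positivity
  have hx0 : ∀ i, 0 ≤ ∑ x ∈ Y i, EFXAux.vv m ε i x :=
    fun i => Finset.sum_nonneg (fun x _ => hvpos i x)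
  have hPY0 : 0 ≤ ∏ i, ∑ x ∈ Y i, EFXAux.vv m ε i x :=
    Finset.prod_nonneg (fun i _ => hx0 i)
  have hPYle : ∏ i, ∑ x ∈ Y i, EFXAux.vv m ε i x
      ≤ ((((m:ℝ)+1) + ε/2)/((m:ℝ)+1))^(m+1) := by
    calc ∏ i, ∑ x ∈ Y i, EFXAux.vv m ε i x
        ≤ ((∑ i, ∑ x ∈ Y i, EFXAux.vv m ε i x) / ((m+1:ℕ):ℝ))^(m+1) :=
          EFXAux.amgm (Nat.succ_pos m) _ hx0
      _ ≤ ((((m:ℝ)+1) + ε/2)/((m:ℝ)+1))^(m+1) := by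
          apply pow_le_pow_left₀ (div_nonneg (Finset.sum_nonneg fun i _ => hx0 i) (by positivity))
          push_cast
          gcongr
  have hfX0 : 0 ≤ f X := le_trans (mul_nonneg (pow_nonneg (by linarith) m) (by linarith)) hPXlow
  -- final inequality
  push_cast
  set c : ℝ := (2:ℝ) ^ (1 - 1/((m:ℝ)+1)) - 2*ε with hc
  rcases le_or_gt c 0 with hcle | hcpos
  · calc c * (∏ i, ∑ x ∈ Y i, EFXAux.vv m ε i x) ^ (1/((m:ℝ)+1))
        ≤ 0 := mul_nonpos_of_nonpos_of_nonneg hcle (Real.rpow_nonneg hPY0 _)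
      _ ≤ (f X) ^ (1/((m:ℝ)+1)) := Real.rpow_nonneg hfX0 _
  · have hmain : c^(m+1) * ∏ i, ∑ x ∈ Y i, EFXAux.vv m ε i x ≤ f X := by
      calc c^(m+1) * ∏ i, ∑ x ∈ Y i, EFXAux.vv m ε i x
          ≤ c^(m+1) * ((((m:ℝ)+1) + ε/2)/((m:ℝ)+1))^(m+1) :=
            mul_le_mul_of_nonneg_left hPYle (pow_nonneg hcpos.le _)
        _ ≤ (2-ε)^m * (1-ε) := EFXAux.analytic m ε hε0 hε hcpos
        _ ≤ f X := hPXlow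
    have h1 : (c^(m+1) * ∏ i, ∑ x ∈ Y i, EFXAux.vv m ε i x) ^ (1/((m:ℝ)+1))
        ≤ (f X) ^ (1/((m:ℝ)+1)) :=
      Real.rpow_le_rpow (mul_nonneg (pow_nonneg hcpos.le _) hPY0) hmain (by positivity)
    have h2 : (c^(m+1) * ∏ i, ∑ x ∈ Y i, EFXAux.vv m ε i x) ^ (1/((m:ℝ)+1))
        = c * (∏ i, ∑ x ∈ Y i, EFXAux.vv m ε i x) ^ (1/((m:ℝ)+1)) := by
      rw [Real.mul_rpow (pow_nonneg hcpos.le _) hPY0]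
      congr 1
      rw [← Real.rpow_natCast c (m+1), ← Real.rpow_mul hcpos.le]
      rw [show ((m+1:ℕ):ℝ) * (1/((m:ℝ)+1)) = 1 by push_cast; field_simp, Real.rpow_one]
    rw [h2] at h1
    exact h1
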